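/- Let f be convex and differentiable on [a,b], let m ∈ (a,b), and let T be the triangle for [a,b] (vertices (a,f(a)), (b,f(b)) and the intersection of the tangents at a and b), and T₁, T₂ the triangles for [a,m] and [m,b] respectively. Then T₁ ∪ T₂ ⊆ T, i.e., refining the partition produces a smaller relaxation. -/

import Mathlib

lemma combo_mem_hull3 (A B C P : ℝ × ℝ) (α β γ : ℝ) (hα : 0 ≤ α) (hβ : 0 ≤ β) (hγ : 0 ≤ γ)
    (hsum : α + β + γ = 1) (hP : P = α • A + β • B + γ • C) :
    P ∈ convexHull ℝ ({A, B, C} : Set (ℝ × ℝ)) := by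
  have h := Finset.centerMass_mem_convexHull (t := (Finset.univ : Finset (Fin 3)))
    (w := ![α, β, γ]) (z := ![A, B, C]) (s := ({A, B, C} : Set (ℝ × ℝ)))
    (by intro i _; fin_cases i <;> simpa) (by simp [Fin.sum_univ_three, hsum])
    (by intro i _; fin_cases i <;> simp)
  rw [Finset.centerMass, Fin.sum_univ_three, Fin.sum_univ_three] at h
  simpa [hsum, ← hP] using h

lemma mem_tri_of (a b ya yb sa sb x y : ℝ) (hab : a < b) (hs : sa < sb)
    (hDa : 0 < yb - ya - sa * (b - a)) (hDb : 0 < ya - yb + sb * (b - a))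
    (h1 : ya + sa * (x - a) ≤ y) (h2 : yb + sb * (x - b) ≤ y)
    (h3 : y * (b - a) ≤ ya * (b - a) + (yb - ya) * (x - a)) :
    (x, y) ∈ convexHull ℝ
      ({(a, ya), (b, yb),
        ((ya - yb + sb * b - sa * a) / (sb - sa),
         ya + sa * ((ya - yb + sb * b - sa * a) / (sb - sa) - a))} : Set (ℝ × ℝ)) := by
  set c := (ya - yb + sb * b - sa * a) / (sb - sa) with hc
  have hba : (0:ℝ) < b - a := sub_pos.2 hab
  have hss : (0:ℝ) < sb - sa := sub_pos.2 hs
  set Da := yb - ya - sa * (b - a) with hDa'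
  set Db := ya - yb + sb * (b - a) with hDb'
  have hDa0 : Da ≠ 0 := ne_of_gt hDa
  have hDb0 : Db ≠ 0 := ne_of_gt hDb
  have hba0 : b - a ≠ 0 := ne_of_gt hba
  have hss0 : sb - sa ≠ 0 := ne_of_gt hss
  refine combo_mem_hull3 _ _ _ _
    ((y - (yb + sb * (x - b))) / Db)
    ((y - (ya + sa * (x - a))) / Da)
    (((ya * (b - a) + (yb - ya) * (x - a)) - y * (b - a)) * (sb - sa) / (Da * Db))
    (div_nonneg (by linarith) hDb.le)
    (div_nonneg (by linarith) hDa.le)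
    (div_nonneg (mul_nonneg (by linarith) hss.le) (by positivity))
    (by field_simp; ring)
    ?_
  have : ((x, y) : ℝ × ℝ) =
      (((y - (yb + sb * (x - b))) / Db) * a + ((y - (ya + sa * (x - a))) / Da) * b +
        ((((ya * (b - a) + (yb - ya) * (x - a)) - y * (b - a)) * (sb - sa) / (Da * Db))) * c,
       ((y - (yb + sb * (x - b))) / Db) * ya + ((y - (ya + sa * (x - a))) / Da) * yb +
        ((((ya * (b - a) + (yb - ya) * (x - a)) - y * (b - a)) * (sb - sa) / (Da * Db))) *
          (ya + sa * (c - a))) := by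
    have hDa1 : yb - ya - sa * (b - a) ≠ 0 := hDa0
    have hDb1 : ya - yb + sb * (b - a) ≠ 0 := hDb0
    have hDa2 : yb - ya - (b - a) * sa ≠ 0 := by rw [hDa'] at hDa0; intro h; apply hDa0; linarith
    refine Prod.ext ?_ ?_ <;> simp only [hc, hDa', hDb'] <;> field_simp <;> ring
  rw [this]
  simp [Prod.smul_mk, smul_eq_mul, Prod.mk_add_mk]

theorem refined_triangles_subset
    (f f' : ℝ → ℝ) (a m b : ℝ) (ham : a < m) (hmb : m < b)
    (hconv : ConvexOn ℝ (Set.Icc a b) f)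
    (hderiv : ∀ x ∈ Set.Icc a b, HasDerivAt f (f' x) x)
    (h1 : f' a < f' m) (h2 : f' m < f' b) :
    let c : ℝ → ℝ → ℝ := fun u v =>
      (f u - f v + f' v * v - f' u * u) / (f' v - f' u)
    let tri : ℝ → ℝ → Set (ℝ × ℝ) := fun u v =>
      convexHull ℝ ({(u, f u), (v, f v), (c u v, f u + f' u * (c u v - u))} : Set (ℝ × ℝ))
    tri a m ∪ tri m b ⊆ tri a b := by
  intro c tri
  have hab : a < b := ham.trans hmb
  have ha' : a ∈ Set.Icc a b := ⟨le_refl a, hab.le⟩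
  have hm' : m ∈ Set.Icc a b := ⟨ham.le, hmb.le⟩
  have hb' : b ∈ Set.Icc a b := ⟨hab.le, le_refl b⟩
  -- tangent line inequality
  have tan : ∀ x ∈ Set.Icc a b, ∀ z ∈ Set.Icc a b, f x + f' x * (z - x) ≤ f z := by
    intro x hx z hz
    rcases lt_trichotomy x z with h | h | h
    · have hs := hconv.le_slope_of_hasDerivAt hx hz h (hderiv x hx)
      rw [slope_def_field] at hs
      have := (le_div_iff₀ (sub_pos.2 h)).1 hs
      linarith
    · simp [h]
    · have hs := hconv.slope_le_of_hasDerivAt hz hx h (hderiv x hx)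
      rw [slope_def_field] at hs
      have := (div_le_iff₀ (sub_pos.2 h)).1 hs
      linarith
  have t_am := tan a ha' m hm'
  have t_ab := tan a ha' b hb'
  have t_ma := tan m hm' a ha'
  have t_mb := tan m hm' b hb'
  have t_ba := tan b hb' a ha'
  have t_bm := tan b hb' m hm'
  have hDa : 0 < f b - f a - f' a * (b - a) := by nlinarith
  have hDb : 0 < f a - f b + f' b * (b - a) := by nlinarith
  -- key points memberships in tri a b
  have hA : ((a, f a) : ℝ × ℝ) ∈ tri a b := subset_convexHull ℝ _ (by simp)
  have hB : ((b, f b) : ℝ × ℝ) ∈ tri a b := subset_convexHull ℝ _ (by simp)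
  have memtri : ∀ x y : ℝ, f a + f' a * (x - a) ≤ y → f b + f' b * (x - b) ≤ y →
      y * (b - a) ≤ f a * (b - a) + (f b - f a) * (x - a) → ((x, y) : ℝ × ℝ) ∈ tri a b := by
    intro x y hh1 hh2 hh3
    exact mem_tri_of a b (f a) (f b) (f' a) (f' b) x y hab (h1.trans h2) hDa hDb hh1 hh2 hh3
  have hM : ((m, f m) : ℝ × ℝ) ∈ tri a b := by
    refine memtri m (f m) (by linarith) (by linarith) ?_
    nlinarith [mul_nonneg (sub_nonneg.2 (show f m - f a ≤ f' m * (m - a) by linarith))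
        (sub_pos.2 hmb).le,
      mul_nonneg (sub_nonneg.2 (show f' m * (b - m) ≤ f b - f m by linarith))
        (sub_pos.2 ham).le]
  -- Q1 : apex of tri a m
  have hQ1 : ((c a m, f a + f' a * (c a m - a)) : ℝ × ℝ) ∈ tri a b := by
    set x₁ := c a m with hx₁def
    have hx1 : x₁ * (f' m - f' a) = f a - f m + f' m * m - f' a * a := by
      rw [hx₁def]
      show (f a - f m + f' m * m - f' a * a) / (f' m - f' a) * (f' m - f' a) = _
      rw [div_mul_cancel₀ _ (ne_of_gt (sub_pos.2 h1))]
    have hge : a ≤ x₁ := by nlinarith [sub_pos.2 h1]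
    have hle : x₁ ≤ m := by nlinarith [sub_pos.2 h1]
    have heq : f a + f' a * (x₁ - a) = f m + f' m * (x₁ - m) := by linarith [hx1]
    refine memtri x₁ (f a + f' a * (x₁ - a)) le_rfl ?_ ?_
    · rw [heq]
      nlinarith [mul_nonneg (sub_pos.2 h2).le (sub_nonneg.2 hle)]
    · nlinarith [mul_nonneg hDa.le (sub_nonneg.2 hge)]
  -- Q2 : apex of tri m b
  have hQ2 : ((c m b, f m + f' m * (c m b - m)) : ℝ × ℝ) ∈ tri a b := by
    set x₂ := c m b with hx₂def
    have hx2 : x₂ * (f' b - f' m) = f m - f b + f' b * b - f' m * m := by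
      rw [hx₂def]
      show (f m - f b + f' b * b - f' m * m) / (f' b - f' m) * (f' b - f' m) = _
      rw [div_mul_cancel₀ _ (ne_of_gt (sub_pos.2 h2))]
    have hge : m ≤ x₂ := by nlinarith [sub_pos.2 h2]
    have hle : x₂ ≤ b := by nlinarith [sub_pos.2 h2]
    have heq : f m + f' m * (x₂ - m) = f b + f' b * (x₂ - b) := by linarith [hx2]
    refine memtri x₂ (f m + f' m * (x₂ - m)) ?_ (by rw [heq]) ?_
    · nlinarith [mul_nonneg (sub_pos.2 h1).le (sub_nonneg.2 hge)]
    · rw [heq]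
      nlinarith [mul_nonneg (sub_nonneg.2 hle) hDb.le]
  rw [Set.union_subset_iff]
  constructor <;>
    refine convexHull_min ?_ (convex_convexHull ℝ _) <;> intro p hp <;>
    simp only [Set.mem_insert_iff, Set.mem_singleton_iff] at hp <;>
    rcases hp with rfl | rfl | rfl
  exacts [hA, hM, hQ1, hM, hB, hQ2]
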